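/- R-superlinear convergence under an aggressively decaying recursion: let 0 < ρ₀ < ρ < 1 and ξ > 0, set σ = (ρ − ρ₀)/(2ξ), and define τ₁ = ρ, τₖ = ρᵏ⁻¹τₖ₋₁ for k ≥ 2 (so τₖ = ρ·∏_{i=1}^{k−1} ρⁱ). Suppose a nonnegative sequence dₖ satisfies d₀ ≤ σ and dₖ₊₁ ≤ (∏_{i=1}^{k} ρⁱ)·ρ₀σ + ξdₖ² for all k ≥ 0. Then dₖ ≤ τₖ·σ for all k ≥ 1, and τₖ₊₁/τₖ = ρᵏ → 0, i.e., the convergence is R-superlinear. -/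

import Mathlib

set_option maxHeartbeats 1000000 in
/-- R-superlinear convergence under an aggressively decaying recursion. -/
theorem r_superlinear_convergence (d : ℕ → ℝ) (ρ ρ₀ ξ σ : ℝ) (τ : ℕ → ℝ)
    (hρ₀ : 0 < ρ₀) (hρ₀ρ : ρ₀ < ρ) (hρ : ρ < 1) (hξ : 0 < ξ)
    (hσ : σ = (ρ - ρ₀) / (2 * ξ))
    (hτ : ∀ k : ℕ, τ k = ρ * ∏ i ∈ Finset.Icc 1 (k - 1), ρ ^ i)
    (hd : ∀ k, 0 ≤ d k) (h0 : d 0 ≤ σ)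
    (hrec : ∀ k : ℕ, d (k + 1) ≤ (∏ i ∈ Finset.Icc 1 k, ρ ^ i) * ρ₀ * σ + ξ * d k ^ 2) :
    (∀ k : ℕ, 1 ≤ k → d k ≤ τ k * σ) ∧
    (∀ k : ℕ, 1 ≤ k → τ (k + 1) / τ k = ρ ^ k) ∧
    Filter.Tendsto (fun k : ℕ => ρ ^ k) Filter.atTop (nhds 0) := by
  have hρpos : 0 < ρ := hρ₀.trans hρ₀ρ
  have hσpos : 0 < σ := by
    rw [hσ]
    exact div_pos (by linarith) (by linarith)
  have hξσ : ξ * σ = (ρ - ρ₀) / 2 := by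
    rw [hσ]; field_simp
  set e : ℕ → ℕ := fun k => ∑ i ∈ Finset.Icc 1 k, i with he
  have hP : ∀ k, ∏ i ∈ Finset.Icc 1 k, ρ ^ i = ρ ^ e k := by
    intro k
    rw [he]
    exact Finset.prod_pow_eq_pow_sum _ _ _
  have hτ' : ∀ k, τ k = ρ ^ (1 + e (k - 1)) := by
    intro k
    rw [hτ, hP, pow_add, pow_one]
  have heS : ∀ m : ℕ, e (m + 1) = e m + (m + 1) := by
    intro m
    simp only [he]
    rw [Finset.sum_Icc_succ_top (by omega)]
  have hem : ∀ m : ℕ, m ≤ e m := by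
    intro m
    induction m with
    | zero => simp [he]
    | succ n ih => rw [heS]; omega
  refine ⟨?_, ?_, ?_⟩
  · intro k hk
    induction k, hk using Nat.le_induction with
    | base =>
      have h1 := hrec 0
      have hd0 : d 0 ^ 2 ≤ σ ^ 2 := by nlinarith [hd 0]
      rw [hτ']
      simp only [he] at *
      simp at h1 ⊢
      nlinarith [hd 0]
    | succ k hk ih =>
      have h1 := hrec k
      have hτk := hτ' k
      have hτk1 := hτ' (k + 1)
      rw [Nat.add_sub_cancel] at hτk1
      -- key exponent inequality: 1 + e k ≤ 2 + 2 * e (k - 1)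
      have hexp : 1 + e k ≤ (1 + e (k - 1)) + (1 + e (k - 1)) := by
        obtain ⟨m, rfl⟩ := Nat.exists_eq_add_of_le' hk
        have := heS m
        have := hem m
        simp only [Nat.add_sub_cancel] at *
        omega
      have hkey : τ k ^ 2 ≤ ρ ^ (1 + e k) := by
        rw [hτk, ← pow_mul]
        apply pow_le_pow_of_le_one hρpos.le hρ.le
        omega
      have hρe : 0 < ρ ^ e k := pow_pos hρpos _
      have hdk2 : d k ^ 2 ≤ (τ k * σ) ^ 2 := by nlinarith [hd k]
      have hτkpos : 0 < τ k := by rw [hτk]; positivity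
      rw [hτk1, hP] at *
      rw [pow_add, pow_one]
      -- d (k+1) ≤ ρ^{e k} ρ₀ σ + ξ (τ k σ)² ≤ ρ · ρ^{e k} · σ
      have h2 : ξ * d k ^ 2 ≤ (ρ - ρ₀) / 2 * (τ k ^ 2) * σ := by
        calc ξ * d k ^ 2 ≤ ξ * ((τ k * σ) ^ 2) := by nlinarith
          _ = (ξ * σ) * τ k ^ 2 * σ := by ring
          _ = (ρ - ρ₀) / 2 * (τ k ^ 2) * σ := by rw [hξσ]
      have h3 : (ρ - ρ₀) / 2 * (τ k ^ 2) * σ ≤ (ρ - ρ₀) * ρ ^ e k * σ := by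
        have hr : ρ ^ (1 + e k) = ρ * ρ ^ e k := by rw [pow_add, pow_one]
        have hkey' : τ k ^ 2 ≤ ρ * ρ ^ e k := hr ▸ hkey
        have hA : τ k ^ 2 * σ ≤ ρ * (ρ ^ e k * σ) := by nlinarith
        have hB : (ρ - ρ₀) / 2 * (τ k ^ 2 * σ) ≤ (ρ - ρ₀) / 2 * (ρ * (ρ ^ e k * σ)) :=
          mul_le_mul_of_nonneg_left hA (by linarith)
        nlinarith [mul_pos (sub_pos.2 hρ₀ρ) (mul_pos hρe hσpos)]
      nlinarith [mul_pos hρe hσpos]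
  · intro k hk
    obtain ⟨m, rfl⟩ := Nat.exists_eq_add_of_le' hk
    have hτk := hτ' (m + 1)
    have hτk1 := hτ' (m + 1 + 1)
    simp only [Nat.add_sub_cancel] at hτk hτk1
    rw [hτk1, hτk, heS m, show 1 + (e m + (m + 1)) = (1 + e m) + (m + 1) by ring, pow_add]
    exact mul_div_cancel_left₀ _ (pow_ne_zero _ hρpos.ne')
  · exact tendsto_pow_atTop_nhds_zero_of_lt_one hρpos.le hρ
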